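/- Let a₁,…,a_{n₁} be distinct complex numbers in the open upper half-plane, b₁,…,b_{n₂} distinct complex numbers in the open lower half-plane, and α₁,…,α_{n₁}, β₁,…,β_{n₂} ∈ ℂ, and define K(x) = (1/(2πi))[ Σ_{j=1}^{n₁} α_j/(x−a_j) − Σ_{j=1}^{n₂} β_j/(x−b_j) ] for x ∈ ℝ. If Σ_{j=1}^{n₁} α_j a_j^k = Σ_{j=1}^{n₂} β_j b_j^k for k = 0, 1, …, m−1, and moreover Σ_{j=1}^{n₁} α_j = 1, while Σ_{j=1}^{n₁} α_j a_j^k = 0 for k = 1, …, m−1, then K is an mth order kernel: ∫_ℝ K(x)dx = 1, for each 0 < j < m the function x ↦ K(x)x^j is integrable with ∫_ℝ K(x)x^j dx = 0, and there is a constant C_K > 0 with |K(x)| ≤ C_K/(1+|x|)^{m+1} for all x ∈ ℝ. -/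

import Mathlib

open MeasureTheory Real Set Filter

lemma sub_ne_of_im (x : ℝ) {c : ℂ} (hc : c.im ≠ 0) : (x:ℂ) - c ≠ 0 := by
  intro h
  apply hc
  have := congrArg Complex.im h
  simpa using this.symm

lemma abs_lower {c : ℂ} (hc : c.im ≠ 0) :
    ∃ C > 0, ∀ x : ℝ, 1 + |x| ≤ C * ‖((x:ℂ) - c)‖ := by
  have him : 0 < |c.im| := abs_pos.2 hc
  refine ⟨(2 + 2 * ‖c‖) / |c.im| + 2, by positivity, fun x => ?_⟩
  have h1 : |c.im| ≤ ‖((x:ℂ) - c)‖ := by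
    have := Complex.abs_im_le_norm ((x:ℂ) - c)
    simpa using this
  have h2 : |x| - ‖c‖ ≤ ‖((x:ℂ) - c)‖ := by
    have := norm_sub_norm_le ((x:ℂ)) c
    simpa using this
  have habs : 0 ≤ ‖((x:ℂ) - c)‖ := norm_nonneg _
  have hca : |c.im| ≤ ‖c‖ := Complex.abs_im_le_norm c
  rcases le_or_gt (|x|) (2 * ‖c‖ + 1) with hx | hx
  · have key : 1 + |x| ≤ ((2 + 2 * ‖c‖) / |c.im|) * ‖((x:ℂ) - c)‖ := by
      have : 1 + |x| ≤ ((2 + 2 * ‖c‖) / |c.im|) * |c.im| := by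
        rw [div_mul_cancel₀ _ (ne_of_gt him)]
        linarith
      refine this.trans ?_
      apply mul_le_mul_of_nonneg_left h1 (by positivity)
    nlinarith [mul_le_mul_of_nonneg_left habs (le_of_lt (show (0:ℝ) < 2 by norm_num))]
  · have : (1 + |x|) / 2 ≤ ‖((x:ℂ) - c)‖ := by linarith
    have h3 : 1 + |x| ≤ 2 * ‖((x:ℂ) - c)‖ := by linarith
    have h4 : 0 < (2 + 2 * ‖c‖) / |c.im| := by positivity
    nlinarith

lemma integrable_diff_inv {c d : ℂ} (hc : c.im ≠ 0) (hd : d.im ≠ 0) :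
    Integrable (fun x : ℝ => 1 / ((x:ℂ) - c) - 1 / ((x:ℂ) - d)) := by
  obtain ⟨C, hC, hCle⟩ := abs_lower hc
  obtain ⟨D, hD, hDle⟩ := abs_lower hd
  have hcont : Continuous (fun x : ℝ => 1 / ((x:ℂ) - c) - 1 / ((x:ℂ) - d)) := by
    apply Continuous.sub
    · exact continuous_const.div (by continuity) (fun x => sub_ne_of_im x hc)
    · exact continuous_const.div (by continuity) (fun x => sub_ne_of_im x hd)
  refine (Integrable.const_mul integrable_inv_one_add_sq
    (‖(c - d)‖ * (C * D))).mono' hcont.aestronglyMeasurable ?_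
  filter_upwards with x
  have hxc := sub_ne_of_im x hc
  have hxd := sub_ne_of_im x hd
  have heq : 1 / ((x:ℂ) - c) - 1 / ((x:ℂ) - d) = (c - d) / (((x:ℂ) - c) * ((x:ℂ) - d)) := by
    field_simp
    ring
  rw [heq]
  have hnp : (0:ℝ) < ‖((x:ℂ) - c) * ((x:ℂ) - d)‖ := norm_pos_iff.2 (mul_ne_zero hxc hxd)
  have hpos : (0:ℝ) < 1 + x ^ 2 := by positivity
  have hprod : 1 + x ^ 2 ≤ (C * D) * ‖((x:ℂ) - c) * ((x:ℂ) - d)‖ := by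
    have h1 : (1 + x^2) ≤ (1 + |x|)^2 := by nlinarith [abs_nonneg x, sq_abs x]
    have h2 := mul_le_mul (hCle x) (hDle x) (by positivity) (by positivity)
    rw [norm_mul]
    nlinarith [abs_nonneg x]
  have hM : ‖(c - d)‖ * (C * D) * (1 + x ^ 2)⁻¹
      = ‖(c - d)‖ * (C * D) / (1 + x ^ 2) := by
    rw [div_eq_mul_inv]
  rw [norm_div, hM, div_le_div_iff₀ hnp hpos]
  have hcd : (0:ℝ) ≤ ‖c - d‖ := norm_nonneg _
  nlinarith


lemma tendsto_inv_sub (c : ℂ) :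
    Tendsto (fun x : ℝ => ((x:ℂ) - c)⁻¹) (atBot ⊔ atTop) (nhds 0) := by
  rw [tendsto_zero_iff_norm_tendsto_zero]
  have hb : ∀ᶠ x : ℝ in atBot ⊔ atTop, ‖((x:ℂ) - c)⁻¹‖ ≤ 2 / |x| := by
    rw [eventually_sup]
    constructor
    · filter_upwards [eventually_le_atBot (-(2 * ‖c‖ + 2))] with x hx
      have hax : 2 * ‖c‖ + 2 ≤ |x| := by
        rw [abs_of_nonpos (by nlinarith [norm_nonneg c])]; linarith
      have h1 : |x| / 2 ≤ ‖((x:ℂ) - c)‖ := by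
        have := norm_sub_norm_le ((x:ℂ)) c
        simp only [Complex.norm_real, Real.norm_eq_abs] at this
        nlinarith [norm_nonneg c]
      rw [norm_inv]
      rw [inv_le_iff_one_le_mul₀ (by nlinarith [norm_nonneg c])]
      have hxpos : 0 < |x| := by nlinarith [norm_nonneg c]
      rw [div_mul_eq_mul_div, le_div_iff₀ hxpos]
      nlinarith
    · filter_upwards [eventually_ge_atTop (2 * ‖c‖ + 2)] with x hx
      have hax : 2 * ‖c‖ + 2 ≤ |x| := by
        rw [abs_of_nonneg (by nlinarith [norm_nonneg c])]; linarith
      have h1 : |x| / 2 ≤ ‖((x:ℂ) - c)‖ := by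
        have := norm_sub_norm_le ((x:ℂ)) c
        simp only [Complex.norm_real, Real.norm_eq_abs] at this
        nlinarith [norm_nonneg c]
      rw [norm_inv]
      rw [inv_le_iff_one_le_mul₀ (by nlinarith [norm_nonneg c])]
      have hxpos : 0 < |x| := by nlinarith [norm_nonneg c]
      rw [div_mul_eq_mul_div, le_div_iff₀ hxpos]
      nlinarith
  have h0 : Tendsto (fun x : ℝ => 2 / |x|) (atBot ⊔ atTop) (nhds 0) := by
    apply Tendsto.div_atTop (tendsto_const_nhds)
    rw [tendsto_sup]
    exact ⟨tendsto_abs_atBot_atTop, tendsto_abs_atTop_atTop⟩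
  exact squeeze_zero' (by filter_upwards with x using norm_nonneg _) hb h0

lemma hI_im : (Complex.I).im ≠ 0 := by simp

lemma integral_h_upper {c : ℂ} (hc : 0 < c.im) :
    ∫ x : ℝ, (1/((x:ℂ)-c) - 1/((x:ℂ)-Complex.I)) = 0 := by
  have hcim : c.im ≠ 0 := ne_of_gt hc
  set u : ℝ → ℂ := fun x => ((x:ℂ) - c) / ((x:ℂ) - Complex.I) with hu
  have hxc : ∀ x : ℝ, (x:ℂ) - c ≠ 0 := fun x => sub_ne_of_im x hcim
  have hxI : ∀ x : ℝ, (x:ℂ) - Complex.I ≠ 0 := fun x => sub_ne_of_im x hI_im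
  have hslit : ∀ x : ℝ, u x ∈ Complex.slitPlane := by
    intro x
    rw [Complex.mem_slitPlane_iff]
    by_cases him : (u x).im = 0
    · left
      have h1 : u x * ((x:ℂ) - Complex.I) = (x:ℂ) - c := div_mul_cancel₀ _ (hxI x)
      have := congrArg Complex.im h1
      simp only [Complex.mul_im, Complex.sub_im, Complex.ofReal_im, Complex.I_im,
        Complex.sub_re, Complex.ofReal_re, Complex.I_re, him] at this
      -- this : (u x).re * (0 - 1) + 0 * (x - 0) = 0 - c.im
      have : (u x).re = c.im := by linarith
      linarith
    · right; exact him
  have hderiv : ∀ x : ℝ, HasDerivAt (fun y : ℝ => Complex.log (u y))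
      (1/((x:ℂ)-c) - 1/((x:ℂ)-Complex.I)) x := by
    intro x
    have h1 : HasDerivAt (fun y : ℝ => (y:ℂ) - c) 1 x := by
      simpa using (Complex.ofRealCLM.hasDerivAt (x := x)).sub_const c
    have h2 : HasDerivAt (fun y : ℝ => (y:ℂ) - Complex.I) 1 x := by
      simpa using (Complex.ofRealCLM.hasDerivAt (x := x)).sub_const Complex.I
    have h3 : HasDerivAt u
        ((1 * ((x:ℂ) - Complex.I) - ((x:ℂ) - c) * 1) / ((x:ℂ) - Complex.I)^2) x :=
      h1.div h2 (hxI x)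
    have h4 := h3.clog_real (hslit x)
    convert h4 using 1
    simp only [hu]
    field_simp [hxc x, hxI x]
  have htend : Tendsto u (atBot ⊔ atTop) (nhds 1) := by
    have h0 := tendsto_inv_sub Complex.I
    have : Tendsto (fun x : ℝ => 1 + (Complex.I - c) * ((x:ℂ) - Complex.I)⁻¹)
        (atBot ⊔ atTop) (nhds 1) := by
      have := (h0.const_mul (Complex.I - c)).const_add 1
      simpa using this
    refine this.congr (fun x => ?_)
    simp only [hu]
    field_simp [hxI x]
    ring
  have hlog : Tendsto (fun x : ℝ => Complex.log (u x)) (atBot ⊔ atTop) (nhds 0) := by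
    have hcont : ContinuousAt Complex.log 1 :=
      continuousAt_clog (by simp [Complex.mem_slitPlane_iff])
    have := hcont.tendsto.comp htend
    simpa [Function.comp_def] using this
  rw [tendsto_sup] at hlog
  have := integral_of_hasDerivAt_of_tendsto hderiv
    (integrable_diff_inv hcim hI_im) hlog.1 hlog.2
  simpa using this


lemma negI_im : (-Complex.I).im ≠ 0 := by simp

lemma integral_w : ∫ x : ℝ, (1/((x:ℂ)+Complex.I) - 1/((x:ℂ)-Complex.I)) = -(2*π*Complex.I) := by
  have heq : (fun x : ℝ => 1/((x:ℂ)+Complex.I) - 1/((x:ℂ)-Complex.I))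
      = fun x : ℝ => ((1 + x^2)⁻¹ : ℝ) • (-2*Complex.I) := by
    funext x
    have h1 : (x:ℂ) + Complex.I ≠ 0 := by
      have := sub_ne_of_im x negI_im; simpa [sub_neg_eq_add] using this
    have h2 : (x:ℂ) - Complex.I ≠ 0 := sub_ne_of_im x hI_im
    have h3 : ((1 + x^2 : ℝ) : ℂ) ≠ 0 := by
      norm_cast
      positivity
    have h5 : ((x:ℂ)+Complex.I)*((x:ℂ)-Complex.I) = ((1+x^2:ℝ):ℂ) := by
      push_cast
      linear_combination (-1 : ℂ) * Complex.I_sq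
    rw [div_sub_div _ _ h1 h2, h5, Complex.real_smul, Complex.ofReal_inv]
    field_simp
    ring
  rw [heq, integral_smul_const, integral_univ_inv_one_add_sq, Complex.real_smul]
  push_cast
  ring
lemma integral_h_lower {c : ℂ} (hc : c.im < 0) :
    ∫ x : ℝ, (1/((x:ℂ)-c) - 1/((x:ℂ)-Complex.I)) = -(2*π*Complex.I) := by
  have hcim : c.im ≠ 0 := ne_of_lt hc
  have hconjim : 0 < ((starRingEnd ℂ) c).im := by
    rw [Complex.conj_im]; linarith
  set g : ℝ → ℂ := fun x => 1/((x:ℂ)-(starRingEnd ℂ) c) - 1/((x:ℂ)-Complex.I) with hg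
  have hgint : Integrable g := integrable_diff_inv (ne_of_gt hconjim) hI_im
  have hwint : Integrable (fun x : ℝ => 1/((x:ℂ)+Complex.I) - 1/((x:ℂ)-Complex.I)) := by
    have := integrable_diff_inv negI_im hI_im
    simpa [sub_neg_eq_add] using this
  have hgconj : Integrable (fun x => (starRingEnd ℂ) (g x)) := by
    refine hgint.norm.mono' ?_ ?_
    · exact Complex.continuous_conj.comp_aestronglyMeasurable hgint.aestronglyMeasurable
    · filter_upwards with x
      simp
  have heq : (fun x : ℝ => 1/((x:ℂ)-c) - 1/((x:ℂ)-Complex.I))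
      = fun x => (starRingEnd ℂ) (g x) + (1/((x:ℂ)+Complex.I) - 1/((x:ℂ)-Complex.I)) := by
    funext x
    simp only [hg, map_sub, map_div₀, map_one, Complex.conj_ofReal, Complex.conj_conj,
      Complex.conj_I, sub_neg_eq_add]
    ring
  rw [heq, integral_add hgconj hwint, integral_conj]
  have h0 : ∫ x : ℝ, g x = 0 := integral_h_upper hconjim
  rw [h0, integral_w]
  simp


lemma core {n₁ n₂ : ℕ} (a : Fin n₁ → ℂ) (b : Fin n₂ → ℂ) (γ : Fin n₁ → ℂ) (δ : Fin n₂ → ℂ)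
    (haU : ∀ j, 0 < (a j).im) (hbL : ∀ j, (b j).im < 0) (hsum : ∑ j, γ j = ∑ j, δ j) :
    Integrable (fun x : ℝ => ∑ j, γ j / ((x:ℂ) - a j) - ∑ j, δ j / ((x:ℂ) - b j)) ∧
    ∫ x : ℝ, (∑ j, γ j / ((x:ℂ) - a j) - ∑ j, δ j / ((x:ℂ) - b j))
      = 2 * π * Complex.I * ∑ j, γ j := by
  have hAint : ∀ j, Integrable (fun x : ℝ => γ j * (1/((x:ℂ)-a j) - 1/((x:ℂ)-Complex.I))) :=
    fun j => (integrable_diff_inv (ne_of_gt (haU j)) hI_im).const_mul _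
  have hBint : ∀ j, Integrable (fun x : ℝ => δ j * (1/((x:ℂ)-b j) - 1/((x:ℂ)-Complex.I))) :=
    fun j => (integrable_diff_inv (ne_of_lt (hbL j)) hI_im).const_mul _
  have hSA : Integrable (fun x : ℝ => ∑ j, γ j * (1/((x:ℂ)-a j) - 1/((x:ℂ)-Complex.I))) :=
    integrable_finset_sum _ fun j _ => hAint j
  have hSB : Integrable (fun x : ℝ => ∑ j, δ j * (1/((x:ℂ)-b j) - 1/((x:ℂ)-Complex.I))) :=
    integrable_finset_sum _ fun j _ => hBint j
  have heq : (fun x : ℝ => ∑ j, γ j / ((x:ℂ) - a j) - ∑ j, δ j / ((x:ℂ) - b j))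
      = fun x : ℝ => (∑ j, γ j * (1/((x:ℂ)-a j) - 1/((x:ℂ)-Complex.I)))
          - (∑ j, δ j * (1/((x:ℂ)-b j) - 1/((x:ℂ)-Complex.I))) := by
    funext x
    have e : (∑ l : Fin n₁, γ l / ((x:ℂ) - Complex.I)) = ∑ l : Fin n₂, δ l / ((x:ℂ) - Complex.I) := by
      rw [← Finset.sum_div, ← Finset.sum_div, hsum]
    simp only [mul_sub, Finset.sum_sub_distrib, mul_one_div]
    rw [e]
    ring
  constructor
  · rw [heq]; exact hSA.sub hSB
  · rw [heq, integral_sub hSA hSB, integral_finset_sum _ fun j _ => hAint j,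
      integral_finset_sum _ fun j _ => hBint j]
    have hA : ∀ j : Fin n₁, ∫ x : ℝ, γ j * (1/((x:ℂ)-a j) - 1/((x:ℂ)-Complex.I)) = 0 := by
      intro j
      rw [integral_const_mul, integral_h_upper (haU j), mul_zero]
    have hB : ∀ j : Fin n₂, ∫ x : ℝ, δ j * (1/((x:ℂ)-b j) - 1/((x:ℂ)-Complex.I))
        = δ j * -(2*π*Complex.I) := by
      intro j
      rw [integral_const_mul, integral_h_lower (hbL j)]
    rw [Finset.sum_congr rfl fun j _ => hA j, Finset.sum_congr rfl fun j _ => hB j,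
      ← Finset.sum_mul, ← hsum]
    simp
    ring

lemma key_identity {n : ℕ} (c : Fin n → ℂ) (γ : Fin n → ℂ) (x : ℝ)
    (hx : ∀ l, (x:ℂ) - c l ≠ 0) (j : ℕ) :
    (∑ l, γ l / ((x:ℂ) - c l)) * (x:ℂ)^j
      = ∑ l, (γ l * c l ^ j) / ((x:ℂ) - c l)
        + ∑ i ∈ Finset.range j, (∑ l, γ l * c l ^ (j-1-i)) * (x:ℂ)^i := by
  have hterm : ∀ l, (γ l / ((x:ℂ) - c l)) * (x:ℂ)^j
      = (γ l * c l ^ j) / ((x:ℂ) - c l)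
        + ∑ i ∈ Finset.range j, γ l * c l ^ (j-1-i) * (x:ℂ)^i := by
    intro l
    have hgs := geom_sum₂_mul (x:ℂ) (c l) j
    have hexp : ∑ i ∈ Finset.range j, γ l * c l ^ (j-1-i) * (x:ℂ)^i
        = γ l * ∑ i ∈ Finset.range j, (x:ℂ)^i * c l ^ (j-1-i) := by
      rw [Finset.mul_sum]
      exact Finset.sum_congr rfl fun i _ => by ring
    rw [hexp]
    field_simp [hx l]
    linear_combination (-(γ l)) * hgs
  rw [Finset.sum_mul, Finset.sum_congr rfl fun l _ => hterm l, Finset.sum_add_distrib]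
  congr 1
  rw [Finset.sum_comm]
  exact Finset.sum_congr rfl fun i _ => (Finset.sum_mul _ _ _).symm

lemma sum_div_bound {n : ℕ} (c : Fin n → ℂ) (γ : Fin n → ℂ) (him : ∀ l, (c l).im ≠ 0) :
    ∃ C > 0, ∀ x : ℝ, ‖∑ l, γ l / ((x:ℂ) - c l)‖ ≤ C / (1 + |x|) := by
  choose C hCpos hCle using fun l => abs_lower (him l)
  have hsum0 : 0 ≤ ∑ l, ‖γ l‖ * C l :=
    Finset.sum_nonneg fun l _ => mul_nonneg (norm_nonneg _) (hCpos l).le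
  refine ⟨(∑ l, ‖γ l‖ * C l) + 1, by linarith, fun x => ?_⟩
  have hx1 : (0:ℝ) < 1 + |x| := by positivity
  have h1 : ∀ l, ‖γ l / ((x:ℂ) - c l)‖ ≤ (‖γ l‖ * C l) / (1 + |x|) := by
    intro l
    rw [norm_div, div_le_div_iff₀ (norm_pos_iff.2 (sub_ne_of_im x (him l))) hx1]
    have := hCle l x
    have hγ : (0:ℝ) ≤ ‖γ l‖ := norm_nonneg _
    have : ‖γ l‖ * (1 + |x|) ≤ ‖γ l‖ * (C l * ‖((x:ℂ) - c l)‖) :=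
      mul_le_mul_of_nonneg_left this hγ
    simpa [mul_comm, mul_assoc, mul_left_comm] using this
  calc ‖∑ l, γ l / ((x:ℂ) - c l)‖ ≤ ∑ l, ‖γ l / ((x:ℂ) - c l)‖ := norm_sum_le _ _
    _ ≤ ∑ l, (‖γ l‖ * C l) / (1 + |x|) := Finset.sum_le_sum fun l _ => h1 l
    _ = (∑ l, ‖γ l‖ * C l) / (1 + |x|) := by rw [Finset.sum_div]
    _ ≤ ((∑ l, ‖γ l‖ * C l) + 1) / (1 + |x|) := by
        exact (div_le_div_iff_of_pos_right hx1).mpr (by linarith)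

lemma pow_aux (m : ℕ) (t : ℝ) (ht : 0 ≤ t) : (1+t)^m ≤ 2^m * (1 + t^m) := by
  rcases le_total t 1 with h | h
  · calc (1+t)^m ≤ 2^m := pow_le_pow_left₀ (by linarith) (by linarith) m
      _ ≤ 2^m * (1 + t^m) := le_mul_of_one_le_right (by positivity)
          (by nlinarith [pow_nonneg ht m])
  · calc (1+t)^m ≤ (2*t)^m := pow_le_pow_left₀ (by linarith) (by linarith) m
      _ = 2^m * t^m := mul_pow 2 t m
      _ ≤ 2^m * (1 + t^m) := by
          have h2 : (0:ℝ) ≤ 2^m := by positivity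
          nlinarith [pow_nonneg ht m]
/-- The rational kernel with poles `a j` in the upper half-plane and `b j` in the
lower half-plane, and residues `α j`, `β j`. -/
noncomputable def ratKernel {n₁ n₂ : ℕ} (a : Fin n₁ → ℂ) (b : Fin n₂ → ℂ)
    (α : Fin n₁ → ℂ) (β : Fin n₂ → ℂ) (x : ℝ) : ℂ :=
  (1 / (2 * Real.pi * Complex.I)) *
    (∑ j, α j / ((x : ℂ) - a j) - ∑ j, β j / ((x : ℂ) - b j))

/-- If the moment matching conditions `Σ α_j a_j^k = Σ β_j b_j^k` hold for
`k = 0, …, m−1`, with `Σ α_j = 1` and `Σ α_j a_j^k = 0` for `1 ≤ k < m`, then the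
rational kernel `K` is an `m`th order kernel: it is integrable with
`∫ K = 1`, `x ↦ K(x)x^j` is integrable with zero integral for `0 < j < m`, and
`|K(x)| ≤ C_K/(1+|x|)^{m+1}` for some constant `C_K > 0`. -/
theorem stmt_9 (n₁ n₂ : ℕ) (a : Fin n₁ → ℂ) (b : Fin n₂ → ℂ)
    (ha : Function.Injective a) (hb : Function.Injective b)
    (haU : ∀ j, 0 < (a j).im) (hbL : ∀ j, (b j).im < 0)
    (α : Fin n₁ → ℂ) (β : Fin n₂ → ℂ) (m : ℕ) (hm : 1 ≤ m)
    (hmom : ∀ k < m, ∑ j, α j * a j ^ k = ∑ j, β j * b j ^ k)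
    (hnorm : ∑ j, α j = 1)
    (hzero : ∀ k : ℕ, 1 ≤ k → k < m → ∑ j, α j * a j ^ k = 0) :
    Integrable (fun x : ℝ => ratKernel a b α β x) ∧
    (∫ x : ℝ, ratKernel a b α β x) = 1 ∧
    (∀ j : ℕ, 0 < j → j < m →
      Integrable (fun x : ℝ => ratKernel a b α β x * (x : ℂ) ^ j) ∧
      (∫ x : ℝ, ratKernel a b α β x * (x : ℂ) ^ j) = 0) ∧
    ∃ CK > (0 : ℝ), ∀ x : ℝ, ‖ratKernel a b α β x‖ ≤ CK / (1 + |x|) ^ (m + 1) := by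
  have h2πI : (2 * (π:ℂ) * Complex.I) ≠ 0 := by
    simp [Complex.ext_iff, Real.pi_ne_zero]
  -- pointwise identity
  have hKj : ∀ (j : ℕ), (∀ k, k < j → ∑ l, α l * a l ^ k = ∑ l, β l * b l ^ k) →
      (fun x : ℝ => ratKernel a b α β x * (x:ℂ)^j)
        = fun x : ℝ => (1/(2*(π:ℂ)*Complex.I)) *
            (∑ l, (α l * a l ^ j) / ((x:ℂ) - a l) - ∑ l, (β l * b l ^ j) / ((x:ℂ) - b l)) := by
    intro j hj
    funext x
    unfold ratKernel
    have hxa : ∀ l, (x:ℂ) - a l ≠ 0 := fun l => sub_ne_of_im x (ne_of_gt (haU l))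
    have hxb : ∀ l, (x:ℂ) - b l ≠ 0 := fun l => sub_ne_of_im x (ne_of_lt (hbL l))
    rw [mul_assoc]
    congr 1
    rw [sub_mul, key_identity a α x hxa j, key_identity b β x hxb j]
    have hcancel : (∑ i ∈ Finset.range j, (∑ l, α l * a l ^ (j-1-i)) * (x:ℂ)^i)
        = ∑ i ∈ Finset.range j, (∑ l, β l * b l ^ (j-1-i)) * (x:ℂ)^i := by
      refine Finset.sum_congr rfl fun i hi => ?_
      rw [hj (j-1-i) (by have := Finset.mem_range.mp hi; omega)]
    rw [hcancel]
    ring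
  -- integrability and value for each moment j < m
  have main : ∀ j : ℕ, j < m →
      Integrable (fun x : ℝ => ratKernel a b α β x * (x:ℂ)^j) ∧
      ∫ x : ℝ, ratKernel a b α β x * (x:ℂ)^j = ∑ l, α l * a l ^ j := by
    intro j hjm
    have hj : ∀ k, k < j → ∑ l, α l * a l ^ k = ∑ l, β l * b l ^ k :=
      fun k hk => hmom k (hk.trans hjm)
    have heqf := hKj j hj
    obtain ⟨hint, hval⟩ := core a b (fun l => α l * a l ^ j) (fun l => β l * b l ^ j)
      haU hbL (hmom j hjm)
    constructor
    · rw [heqf]; exact hint.const_mul _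
    · rw [heqf, integral_const_mul, hval, ← mul_assoc, one_div, inv_mul_cancel₀ h2πI, one_mul]
  obtain ⟨h0i, h0v⟩ := main 0 hm
  have e0 : (fun x : ℝ => ratKernel a b α β x * (x:ℂ)^(0:ℕ))
      = fun x : ℝ => ratKernel a b α β x := by
    funext x; simp
  refine ⟨?_, ?_, ?_, ?_⟩
  · rw [← e0]; exact h0i
  · rw [← e0] at *
    rw [h0v]
    simpa using hnorm
  · intro j hj0 hjm
    obtain ⟨hji, hjv⟩ := main j hjm
    exact ⟨hji, by rw [hjv, hzero j hj0 hjm]⟩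
  · -- the decay bound
    obtain ⟨CA0, hCA0, hCA0le⟩ := sum_div_bound a α (fun l => ne_of_gt (haU l))
    obtain ⟨CB0, hCB0, hCB0le⟩ := sum_div_bound b β (fun l => ne_of_lt (hbL l))
    obtain ⟨CAm, hCAm, hCAmle⟩ := sum_div_bound a (fun l => α l * a l ^ m)
      (fun l => ne_of_gt (haU l))
    obtain ⟨CBm, hCBm, hCBmle⟩ := sum_div_bound b (fun l => β l * b l ^ m)
      (fun l => ne_of_lt (hbL l))
    set c0 : ℂ := 1/(2*(π:ℂ)*Complex.I) with hc0
    set D0 : ℝ := ‖c0‖ * (CA0 + CB0) with hD0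
    set Dm : ℝ := ‖c0‖ * (CAm + CBm) with hDm
    have hD0nn : 0 ≤ D0 := mul_nonneg (norm_nonneg _) (by linarith)
    have hDmnn : 0 ≤ Dm := mul_nonneg (norm_nonneg _) (by linarith)
    have hKm := hKj m (fun k hk => hmom k hk)
    refine ⟨2^m * (D0 + Dm) + 1, by positivity, fun x => ?_⟩
    have ht : (0:ℝ) ≤ |x| := abs_nonneg x
    have h1t : (0:ℝ) < 1 + |x| := by linarith
    -- bound for K itself
    have hb0 : ‖ratKernel a b α β x‖ ≤ D0 / (1 + |x|) := by
      rw [ratKernel]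
      calc ‖(1 / (2 * (π:ℂ) * Complex.I)) *
            (∑ j, α j / ((x : ℂ) - a j) - ∑ j, β j / ((x : ℂ) - b j))‖
          = ‖c0‖ * ‖∑ j, α j / ((x : ℂ) - a j) - ∑ j, β j / ((x : ℂ) - b j)‖ := by
            rw [norm_mul]
        _ ≤ ‖c0‖ * (‖∑ j, α j / ((x : ℂ) - a j)‖ + ‖∑ j, β j / ((x : ℂ) - b j)‖) :=
            mul_le_mul_of_nonneg_left (norm_sub_le _ _) (norm_nonneg _)
        _ ≤ ‖c0‖ * (CA0 / (1 + |x|) + CB0 / (1 + |x|)) :=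
            mul_le_mul_of_nonneg_left (add_le_add (hCA0le x) (hCB0le x)) (norm_nonneg _)
        _ = D0 / (1 + |x|) := by rw [hD0]; field_simp
    have hbm : ‖ratKernel a b α β x‖ * |x|^m ≤ Dm / (1 + |x|) := by
      have hx : ‖ratKernel a b α β x * (x:ℂ)^m‖ = ‖ratKernel a b α β x‖ * |x|^m := by
        rw [norm_mul, norm_pow, Complex.norm_real]
        norm_num
      rw [← hx, congrFun hKm x]
      calc ‖c0 * (∑ l, (α l * a l ^ m) / ((x:ℂ) - a l)
              - ∑ l, (β l * b l ^ m) / ((x:ℂ) - b l))‖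
          = ‖c0‖ * ‖∑ l, (α l * a l ^ m) / ((x:ℂ) - a l)
              - ∑ l, (β l * b l ^ m) / ((x:ℂ) - b l)‖ := norm_mul _ _
        _ ≤ ‖c0‖ * (‖∑ l, (α l * a l ^ m) / ((x:ℂ) - a l)‖
              + ‖∑ l, (β l * b l ^ m) / ((x:ℂ) - b l)‖) :=
            mul_le_mul_of_nonneg_left (norm_sub_le _ _) (norm_nonneg _)
        _ ≤ ‖c0‖ * (CAm / (1 + |x|) + CBm / (1 + |x|)) :=
            mul_le_mul_of_nonneg_left (add_le_add (hCAmle x) (hCBmle x)) (norm_nonneg _)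
        _ = Dm / (1 + |x|) := by rw [hDm]; field_simp
    have hK0' : ‖ratKernel a b α β x‖ * (1 + |x|) ≤ D0 := (le_div_iff₀ h1t).mp hb0
    have hKm' : ‖ratKernel a b α β x‖ * |x|^m * (1 + |x|) ≤ Dm := (le_div_iff₀ h1t).mp hbm
    have hKnn : 0 ≤ ‖ratKernel a b α β x‖ := norm_nonneg _
    rw [le_div_iff₀ (pow_pos h1t (m+1))]
    calc ‖ratKernel a b α β x‖ * (1 + |x|)^(m+1)
        = (‖ratKernel a b α β x‖ * (1 + |x|)) * (1 + |x|)^m := by rw [pow_succ]; ring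
      _ ≤ (‖ratKernel a b α β x‖ * (1 + |x|)) * (2^m * (1 + |x|^m)) :=
          mul_le_mul_of_nonneg_left (pow_aux m _ ht) (by positivity)
      _ = 2^m * (‖ratKernel a b α β x‖ * (1 + |x|))
          + 2^m * (‖ratKernel a b α β x‖ * |x|^m * (1 + |x|)) := by ring
      _ ≤ 2^m * D0 + 2^m * Dm := add_le_add
          (mul_le_mul_of_nonneg_left hK0' (by positivity))
          (mul_le_mul_of_nonneg_left hKm' (by positivity))
      _ ≤ 2^m * (D0 + Dm) + 1 := by ring_nf; linarith
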